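/- Let f : ℍ → ℝ (regarded as the real-valued quaternion function q ↦ (f(q) : ℍ)) and g : ℍ → ℍ be real-(Fréchet-)differentiable at q ∈ ℍ, and let μ ∈ ℍ be nonzero. Then the right GHR derivatives of the product fg satisfy the traditional product rule ∂ᵣ(fg)/∂q^μ(q) = ∂ᵣf/∂q^μ(q)·g(q) + f(q)·∂ᵣg/∂q^μ(q) and ∂ᵣ(fg)/∂q^{μ*}(q) = ∂ᵣf/∂q^{μ*}(q)·g(q) + f(q)·∂ᵣg/∂q^{μ*}(q). -/

import Mathlib

open Quaternion Filter Topology Asymptotics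

noncomputable section

/-- The imaginary unit `i` of the real quaternions. -/
def qI : ℍ[ℝ] := ⟨0, 1, 0, 0⟩
/-- The imaginary unit `j` of the real quaternions. -/
def qJ : ℍ[ℝ] := ⟨0, 0, 1, 0⟩
/-- The imaginary unit `k` of the real quaternions. -/
def qK : ℍ[ℝ] := ⟨0, 0, 0, 1⟩

/-- Quaternion rotation `p ↦ μ p μ⁻¹`. -/
def qRot (μ p : ℍ[ℝ]) : ℍ[ℝ] := μ * p * μ⁻¹

/-- The left GHR derivative `∂f/∂q^μ` at `q`. -/
def lD (f : ℍ[ℝ] → ℍ[ℝ]) (μ q : ℍ[ℝ]) : ℍ[ℝ] :=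
  (4 : ℍ[ℝ])⁻¹ * (fderiv ℝ f q 1 - fderiv ℝ f q qI * qRot μ qI
    - fderiv ℝ f q qJ * qRot μ qJ - fderiv ℝ f q qK * qRot μ qK)

/-- The left conjugate GHR derivative `∂f/∂q^{μ*}` at `q`. -/
def lDc (f : ℍ[ℝ] → ℍ[ℝ]) (μ q : ℍ[ℝ]) : ℍ[ℝ] :=
  (4 : ℍ[ℝ])⁻¹ * (fderiv ℝ f q 1 + fderiv ℝ f q qI * qRot μ qI
    + fderiv ℝ f q qJ * qRot μ qJ + fderiv ℝ f q qK * qRot μ qK)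

/-- The right GHR derivative `∂ᵣf/∂q^μ` at `q`. -/
def rD (f : ℍ[ℝ] → ℍ[ℝ]) (μ q : ℍ[ℝ]) : ℍ[ℝ] :=
  (4 : ℍ[ℝ])⁻¹ * (fderiv ℝ f q 1 - qRot μ qI * fderiv ℝ f q qI
    - qRot μ qJ * fderiv ℝ f q qJ - qRot μ qK * fderiv ℝ f q qK)

/-- The right conjugate GHR derivative `∂ᵣf/∂q^{μ*}` at `q`. -/
def rDc (f : ℍ[ℝ] → ℍ[ℝ]) (μ q : ℍ[ℝ]) : ℍ[ℝ] :=
  (4 : ℍ[ℝ])⁻¹ * (fderiv ℝ f q 1 + qRot μ qI * fderiv ℝ f q qI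
    + qRot μ qJ * fderiv ℝ f q qJ + qRot μ qK * fderiv ℝ f q qK)

private lemma aux_sub (c Fq gq a1 aI aJ aK b1 bI bJ bK rI rJ rK : ℍ[ℝ])
    (hFq : ∀ x, Fq * x = x * Fq) :
    c * ((a1 * gq + Fq * b1) - rI * (aI * gq + Fq * bI) - rJ * (aJ * gq + Fq * bJ)
        - rK * (aK * gq + Fq * bK))
      = c * (a1 - rI * aI - rJ * aJ - rK * aK) * gq
        + Fq * (c * (b1 - rI * bI - rJ * bJ - rK * bK)) := by
  rw [mul_assoc, ← mul_assoc Fq c, hFq c, mul_assoc, ← mul_add]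
  congr 1
  simp only [hFq]
  noncomm_ring

private lemma aux_add (c Fq gq a1 aI aJ aK b1 bI bJ bK rI rJ rK : ℍ[ℝ])
    (hFq : ∀ x, Fq * x = x * Fq) :
    c * ((a1 * gq + Fq * b1) + rI * (aI * gq + Fq * bI) + rJ * (aJ * gq + Fq * bJ)
        + rK * (aK * gq + Fq * bK))
      = c * (a1 + rI * aI + rJ * aJ + rK * aK) * gq
        + Fq * (c * (b1 + rI * bI + rJ * bJ + rK * bK)) := by
  rw [mul_assoc, ← mul_assoc Fq c, hFq c, mul_assoc, ← mul_add]
  congr 1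
  simp only [hFq]
  noncomm_ring

set_option maxHeartbeats 1000000 in
theorem right_GHR_product_rule_real_factor
    (f : ℍ[ℝ] → ℝ) (g : ℍ[ℝ] → ℍ[ℝ]) (q μ : ℍ[ℝ])
    (hf : DifferentiableAt ℝ (fun p => ((f p : ℝ) : ℍ[ℝ])) q)
    (hg : DifferentiableAt ℝ g q) (hμ : μ ≠ 0) :
    rD (fun p => ((f p : ℝ) : ℍ[ℝ]) * g p) μ q
      = rD (fun p => ((f p : ℝ) : ℍ[ℝ])) μ q * g q + ((f q : ℝ) : ℍ[ℝ]) * rD g μ q ∧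
    rDc (fun p => ((f p : ℝ) : ℍ[ℝ]) * g p) μ q
      = rDc (fun p => ((f p : ℝ) : ℍ[ℝ])) μ q * g q + ((f q : ℝ) : ℍ[ℝ]) * rDc g μ q := by
  set F : ℍ[ℝ] → ℍ[ℝ] := fun p => ((f p : ℝ) : ℍ[ℝ]) with hF
  have key : ∀ v : ℍ[ℝ], fderiv ℝ (fun p => F p * g p) q v
      = fderiv ℝ F q v * g q + F q * fderiv ℝ g q v := by
    intro v
    rw [fderiv_fun_mul' hf hg]
    simp [ContinuousLinearMap.smul_apply, smul_eq_mul, add_comm]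
  have commF : ∀ x : ℍ[ℝ], F q * x = x * F q := fun x =>
    (Quaternion.coe_commute (f q) x).eq
  refine ⟨?_, ?_⟩
  · show (4 : ℍ[ℝ])⁻¹ * (fderiv ℝ (fun p => F p * g p) q 1
        - qRot μ qI * fderiv ℝ (fun p => F p * g p) q qI
        - qRot μ qJ * fderiv ℝ (fun p => F p * g p) q qJ
        - qRot μ qK * fderiv ℝ (fun p => F p * g p) q qK) = _
    rw [key, key, key, key]
    simp only [rD]
    exact aux_sub _ _ _ _ _ _ _ _ _ _ _ _ _ _ commF
  · show (4 : ℍ[ℝ])⁻¹ * (fderiv ℝ (fun p => F p * g p) q 1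
        + qRot μ qI * fderiv ℝ (fun p => F p * g p) q qI
        + qRot μ qJ * fderiv ℝ (fun p => F p * g p) q qJ
        + qRot μ qK * fderiv ℝ (fun p => F p * g p) q qK) = _
    rw [key, key, key, key]
    simp only [rDc]
    exact aux_add _ _ _ _ _ _ _ _ _ _ _ _ _ _ commF

end
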